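/- Let P be the uniform (Lebesgue) probability measure on [0,1] and let p : [0,1] → ℝ be the identity. Define the data-dependent level α̃₁(x) := 0.02 if x ≤ 0.01 and α̃₁(x) := 0.01 otherwise, and the constant level α̃₀ ≡ 0.01. Then: (i) the event {x : x ≤ α̃₁(x)} equals {x : x ≤ 0.01}; (ii) the conditional expectation E[1_{p ≤ α̃₁} | σ(α̃₁)] equals the indicator 1_{p ≤ 0.01} almost everywhere; (iii) the essential supremum (with respect to P) of E[1_{p ≤ α̃₁} | σ(α̃₁)] / α̃₁ is at least 50, hence strictly greater than 1; (iv) nevertheless P(p ≤ 0.01)/0.01 = 1 and α̃₀ ≤ α̃₁ pointwise. -/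
import Mathlib


open MeasureTheory

/-- Example 2 of the paper (ρ = esssup violates monotonicity), concretized on `[0,1]`
with the uniform measure, the identity p-value `p(x) = x`, the constant level
`α̃₀ ≡ 0.01` and the more conservative data-dependent level
`α̃₁(x) = 0.02` if `x ≤ 0.01` and `0.01` otherwise. -/
theorem stmt_12 (P : Measure ℝ) (hP : P = volume.restrict (Set.Icc (0 : ℝ) 1))
    (p : ℝ → ℝ) (hp : p = id)
    (α₁ : ℝ → ℝ) (hα₁ : α₁ = fun x => if x ≤ (0.01 : ℝ) then (0.02 : ℝ) else (0.01 : ℝ))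
    (α₀ : ℝ → ℝ) (hα₀ : α₀ = fun _ => (0.01 : ℝ)) :
    -- (i) the rejection event equals `{x ≤ 0.01}`
    {x : ℝ | p x ≤ α₁ x} = {x : ℝ | x ≤ (0.01 : ℝ)} ∧
    -- (ii) the conditional rejection probability given `σ(α̃₁)`
    P[({x : ℝ | p x ≤ α₁ x}).indicator (fun _ => (1 : ℝ))
        | MeasurableSpace.comap α₁ inferInstance]
      =ᵐ[P] ({x : ℝ | x ≤ (0.01 : ℝ)}).indicator (fun _ => (1 : ℝ)) ∧
    -- (iii) the essential supremum of the distortion ratio is at least 50, hence > 1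
    (50 : ℝ) ≤ essSup (fun x =>
        (P[({x : ℝ | p x ≤ α₁ x}).indicator (fun _ => (1 : ℝ))
          | MeasurableSpace.comap α₁ inferInstance]) x / α₁ x) P ∧
    (1 : ℝ) < essSup (fun x =>
        (P[({x : ℝ | p x ≤ α₁ x}).indicator (fun _ => (1 : ℝ))
          | MeasurableSpace.comap α₁ inferInstance]) x / α₁ x) P ∧
    -- (iv) the constant level `α̃₀ ≡ 0.01` is valid and `α̃₀ ≤ α̃₁` pointwise
    P {x : ℝ | p x ≤ (0.01 : ℝ)} / ENNReal.ofReal (0.01 : ℝ) = 1 ∧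
    ∀ x, α₀ x ≤ α₁ x := by
  have hset : {x : ℝ | p x ≤ α₁ x} = {x : ℝ | x ≤ (0.01 : ℝ)} := by
    subst hp hα₁; ext x; by_cases h : x ≤ (0.01:ℝ) <;> simp [h] <;> linarith
  have hIic : {x : ℝ | x ≤ (0.01 : ℝ)} = Set.Iic (0.01:ℝ) := rfl
  haveI : IsFiniteMeasure P := by
    rw [hP]; constructor
    rw [Measure.restrict_apply_univ, Real.volume_Icc]
    exact ENNReal.ofReal_lt_top
  have hα₁meas : Measurable α₁ := by
    rw [hα₁]; exact Measurable.ite measurableSet_Iic measurable_const measurable_const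
  have hm : MeasurableSpace.comap α₁ inferInstance ≤ (inferInstance : MeasurableSpace ℝ) :=
    hα₁meas.comap_le
  have hS : MeasurableSet[MeasurableSpace.comap α₁ inferInstance] {x : ℝ | x ≤ (0.01:ℝ)} := by
    refine ⟨{(0.02:ℝ)}, measurableSet_singleton _, ?_⟩
    rw [hα₁]; ext x; by_cases h : x ≤ (0.01:ℝ) <;> simp [h] <;> norm_num
  have hce : P[({x : ℝ | p x ≤ α₁ x}).indicator (fun _ => (1 : ℝ))
        | MeasurableSpace.comap α₁ inferInstance]
      = ({x : ℝ | x ≤ (0.01 : ℝ)}).indicator (fun _ => (1 : ℝ)) := by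
    rw [hset]
    exact condExp_of_stronglyMeasurable hm
      ((stronglyMeasurable_const).indicator hS)
      ((integrable_const 1).indicator (hIic ▸ measurableSet_Iic))
  have hPmeas : P {x : ℝ | x ≤ (0.01:ℝ)} = ENNReal.ofReal 0.01 := by
    rw [hIic, hP, Measure.restrict_apply measurableSet_Iic]
    have : Set.Iic (0.01:ℝ) ∩ Set.Icc 0 1 = Set.Icc (0:ℝ) 0.01 := by
      ext x; simp [Set.mem_Iic, Set.mem_Icc]; constructor
      · rintro ⟨h1, h2, h3⟩; exact ⟨h2, h1⟩
      · rintro ⟨h1, h2⟩; exact ⟨h2, h1, by linarith⟩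
    rw [this, Real.volume_Icc]; norm_num
  have h50 : (50 : ℝ) ≤ essSup (fun x =>
      (P[({x : ℝ | p x ≤ α₁ x}).indicator (fun _ => (1 : ℝ))
        | MeasurableSpace.comap α₁ inferInstance]) x / α₁ x) P := by
    rw [hce]
    have hfun : ∀ x : ℝ, ({x : ℝ | x ≤ (0.01 : ℝ)}).indicator (fun _ => (1:ℝ)) x / α₁ x
        = if x ≤ (0.01:ℝ) then (50:ℝ) else 0 := by
      intro x; rw [hα₁]; by_cases h : x ≤ (0.01:ℝ) <;>
        simp [Set.indicator, h] <;> norm_num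
    have hb : Filter.IsBoundedUnder (· ≤ ·) (ae P)
        (fun x => ({x : ℝ | x ≤ (0.01 : ℝ)}).indicator (fun _ => (1:ℝ)) x / α₁ x) := by
      refine Filter.isBoundedUnder_of ⟨50, fun x => ?_⟩
      show ({x : ℝ | x ≤ (0.01 : ℝ)}).indicator (fun _ => (1:ℝ)) x / α₁ x ≤ 50
      rw [hfun x]; split <;> norm_num
    refine Filter.le_limsup_of_frequently_le ?_ hb
    rw [MeasureTheory.frequently_ae_iff]
    have hsub : {x : ℝ | x ≤ (0.01:ℝ)}
        ⊆ {x : ℝ | (50:ℝ) ≤ ({x : ℝ | x ≤ (0.01 : ℝ)}).indicator (fun _ => (1:ℝ)) x / α₁ x} := by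
      intro x hx
      simp only [Set.mem_setOf_eq]
      rw [hfun x, if_pos (show x ≤ (0.01:ℝ) from hx)]
    refine ne_of_gt (lt_of_lt_of_le ?_ (measure_mono hsub))
    rw [hPmeas]; norm_num
  refine ⟨hset, by rw [hce], h50, lt_of_lt_of_le (by norm_num) h50, ?_, ?_⟩
  · have : {x : ℝ | p x ≤ (0.01:ℝ)} = {x : ℝ | x ≤ (0.01:ℝ)} := by rw [hp]; rfl
    rw [this, hPmeas, ENNReal.div_self (by norm_num) (by norm_num)]
  · intro x; rw [hα₀, hα₁]; dsimp; split <;> norm_num
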